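/- Suppose Z ≤ 1/e and n ≥ max{8e, 16·log(1/Z)}. Let b_1, …, b_T be any real sequence with |b_t| ≤ μ for some 0 < μ ≤ 1, and let x_1, …, x_{T+1} be the deviations produced by DNP-cu. Then for every interval [r, s] ⊆ [1, T] with length τ = s − r + 1, the cumulative reward satisfies Σ_{t=r}^{s} ( g(x_t)·b_t − (1/μ)·|g(x_t) − g(x_{t+1})| ) ≥ max( 0, Σ_{t=r}^{s} b_t − (τ/n)·(U(n) + 2μ) − U(n) − μ ) − U(n) − μ − Z·τ. -/

import Mathlib

/-- The Gauss error function `erf(x) = (2/√π) ∫₀ˣ e^{−s²} ds`. -/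
noncomputable def erf (x : ℝ) : ℝ :=
  (2 / Real.sqrt Real.pi) * ∫ s in (0:ℝ)..x, Real.exp (-s ^ 2)

/-- The unclipped confidence function `g̃(x) = √(n/8) · Z · erf(x/√(8n)) · e^{x²/(16n)}`. -/
noncomputable def gtilde (n Z x : ℝ) : ℝ :=
  Real.sqrt (n / 8) * Z * erf (x / Real.sqrt (8 * n)) * Real.exp (x ^ 2 / (16 * n))

/-- The confidence function `g(x)`, the projection of `g̃(x)` onto `[0,1]`. -/
noncomputable def gconf (n Z x : ℝ) : ℝ := min (max (gtilde n Z x) 0) 1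

namespace DNPaux

open MeasureTheory intervalIntegral Real


open MeasureTheory intervalIntegral Real

lemma gauss_ii (a b : ℝ) : IntervalIntegrable (fun s : ℝ => Real.exp (-s ^ 2)) volume a b :=
  Continuous.intervalIntegrable (by continuity) a b

lemma sqrtpi_pos : 0 < Real.sqrt Real.pi := Real.sqrt_pos.2 Real.pi_pos

lemma sqrtpi_ge : (7:ℝ)/4 ≤ Real.sqrt Real.pi := by
  have h : ((7:ℝ)/4)^2 ≤ Real.pi := by nlinarith [Real.pi_gt_d6]
  calc (7:ℝ)/4 = Real.sqrt (((7:ℝ)/4)^2) := (Real.sqrt_sq (by norm_num)).symm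
  _ ≤ _ := Real.sqrt_le_sqrt h

lemma erf_zero : erf 0 = 0 := by unfold erf; simp

lemma erf_diff (p q : ℝ) :
    erf q - erf p = 2 / Real.sqrt Real.pi * ∫ s in p..q, Real.exp (-s ^ 2) := by
  have hadd := integral_add_adjacent_intervals (gauss_ii 0 p) (gauss_ii p q)
  unfold erf
  rw [← hadd]; ring

lemma erf_mono : Monotone erf := by
  intro p q hpq
  have h : 0 ≤ ∫ s in p..q, Real.exp (-s ^ 2) :=
    intervalIntegral.integral_nonneg hpq (fun u _ => (Real.exp_pos _).le)
  have h2 : (0:ℝ) ≤ 2 / Real.sqrt Real.pi := by positivity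
  nlinarith [erf_diff p q]

lemma erf_sub_le {p q : ℝ} (hp : 0 ≤ p) (hpq : p ≤ q) :
    erf q - erf p ≤ 2 / Real.sqrt Real.pi * ((q - p) * Real.exp (-p ^ 2)) := by
  rw [erf_diff p q]
  have h2 : (0:ℝ) ≤ 2 / Real.sqrt Real.pi := by positivity
  apply mul_le_mul_of_nonneg_left _ h2
  have hmono : ∫ s in p..q, Real.exp (-s ^ 2) ≤ ∫ s in p..q, Real.exp (-p ^ 2) := by
    apply integral_mono_on hpq (gauss_ii p q) intervalIntegrable_const
    intro s hs
    exact Real.exp_le_exp.2 (by nlinarith [hs.1, hs.2])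
  calc ∫ s in p..q, Real.exp (-s ^ 2) ≤ ∫ s in p..q, Real.exp (-p ^ 2) := hmono
  _ = (q - p) * Real.exp (-p ^ 2) := by simp [smul_eq_mul]

lemma erf_nonneg {x : ℝ} (hx : 0 ≤ x) : 0 ≤ erf x := by
  have := erf_mono hx
  rwa [erf_zero] at this

lemma erf_nonpos {x : ℝ} (hx : x ≤ 0) : erf x ≤ 0 := by
  have := erf_mono hx
  rwa [erf_zero] at this

lemma erf_le_lin {x : ℝ} (hx : 0 ≤ x) : erf x ≤ 2 / Real.sqrt Real.pi * x := by
  have := erf_sub_le le_rfl hx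
  rw [erf_zero] at this
  simpa using this

lemma exp_le_inv_one_sub {t : ℝ} (h0 : 0 ≤ t) (h1 : t < 1) : Real.exp t ≤ 1 / (1 - t) := by
  have h := Real.add_one_le_exp (-t)
  have hp : 0 < Real.exp t := Real.exp_pos t
  have : Real.exp (-t) = (Real.exp t)⁻¹ := Real.exp_neg t
  rw [this] at h
  have h2 : Real.exp t * (-t + 1) ≤ Real.exp t * (Real.exp t)⁻¹ :=
    mul_le_mul_of_nonneg_left h hp.le
  rw [mul_inv_cancel₀ hp.ne'] at h2
  rw [le_div_iff₀ (by linarith)]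
  nlinarith



open Real


lemma sqrt8n_pos {n : ℝ} (hn : 0 < n) : 0 < Real.sqrt (8 * n) :=
  Real.sqrt_pos.2 (by linarith)

lemma sqrt_prod {n : ℝ} (hn : 0 < n) : Real.sqrt (n / 8) * Real.sqrt (8 * n) = n := by
  rw [← Real.sqrt_mul (by positivity)]
  have h : n / 8 * (8 * n) = n ^ 2 := by ring
  rw [h, Real.sqrt_sq hn.le]

lemma sq_sqrt8n {n : ℝ} (hn : 0 < n) : (Real.sqrt (8 * n)) ^ 2 = 8 * n :=
  Real.sq_sqrt (by positivity)

/-- the key constant identity: √(n/8) * Z * (2/√π) / √(8n) = Z/(4√π) -/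
lemma const_id {n Z : ℝ} (hn : 0 < n) :
    Real.sqrt (n / 8) * Z * (2 / Real.sqrt Real.pi) / Real.sqrt (8 * n)
    = Z / (4 * Real.sqrt Real.pi) := by
  have h8 := sqrt8n_pos hn
  have hp := sqrtpi_pos
  have hq := sqrt_prod hn
  have h3 : Real.sqrt (8 * n) * Real.sqrt (8 * n) = 8 * n := Real.mul_self_sqrt (by positivity)
  have h1 : Real.sqrt (n / 8) = n / Real.sqrt (8 * n) := by
    rw [eq_div_iff h8.ne']; exact hq
  have key : Real.sqrt (n / 8) / Real.sqrt (8 * n) = 1 / 8 := by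
    rw [h1, div_div, h3, div_eq_div_iff (by positivity) (by norm_num)]
    ring
  calc Real.sqrt (n / 8) * Z * (2 / Real.sqrt Real.pi) / Real.sqrt (8 * n)
      = Real.sqrt (n / 8) / Real.sqrt (8 * n) * (Z * (2 / Real.sqrt Real.pi)) := by ring
    _ = 1 / 8 * (Z * (2 / Real.sqrt Real.pi)) := by rw [key]
    _ = Z / (4 * Real.sqrt Real.pi) := by ring

lemma gtilde_nonneg {n Z x : ℝ} (hn : 0 < n) (hZ : 0 ≤ Z) (hx : 0 ≤ x) :
    0 ≤ gtilde n Z x := by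
  unfold gtilde
  have h8 := sqrt8n_pos hn
  have h1 : 0 ≤ erf (x / Real.sqrt (8 * n)) := erf_nonneg (div_nonneg hx h8.le)
  have h2 : (0:ℝ) ≤ Real.sqrt (n / 8) := Real.sqrt_nonneg _
  have h3 : (0:ℝ) < Real.exp (x ^ 2 / (16 * n)) := Real.exp_pos _
  exact mul_nonneg (mul_nonneg (mul_nonneg h2 hZ) h1) h3.le

lemma gtilde_zero {n Z : ℝ} : gtilde n Z 0 = 0 := by unfold gtilde; simp [erf_zero]

lemma gtilde_nonpos {n Z x : ℝ} (hn : 0 < n) (hZ : 0 ≤ Z) (hx : x ≤ 0) :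
    gtilde n Z x ≤ 0 := by
  unfold gtilde
  have h8 := sqrt8n_pos hn
  have h1 : erf (x / Real.sqrt (8 * n)) ≤ 0 := erf_nonpos (div_nonpos_of_nonpos_of_nonneg hx h8.le)
  have h2 : (0:ℝ) ≤ Real.sqrt (n / 8) * Z := by positivity
  have h3 : (0:ℝ) < Real.exp (x ^ 2 / (16 * n)) := Real.exp_pos _
  calc Real.sqrt (n / 8) * Z * erf (x / Real.sqrt (8 * n)) * Real.exp (x ^ 2 / (16 * n))
      = (Real.sqrt (n / 8) * Z * Real.exp (x ^ 2 / (16 * n))) * erf (x / Real.sqrt (8 * n)) := by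
        ring
    _ ≤ 0 := mul_nonpos_of_nonneg_of_nonpos (by positivity) h1

lemma gtilde_mono {n Z p q : ℝ} (hn : 0 < n) (hZ : 0 ≤ Z) (h0 : 0 ≤ p) (hpq : p ≤ q) :
    gtilde n Z p ≤ gtilde n Z q := by
  unfold gtilde
  have h8 := sqrt8n_pos hn
  have hC : (0:ℝ) ≤ Real.sqrt (n / 8) * Z := by positivity
  have hq0 : (0:ℝ) ≤ q := le_trans h0 hpq
  have he : erf (p / Real.sqrt (8 * n)) ≤ erf (q / Real.sqrt (8 * n)) :=
    erf_mono (by gcongr)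
  have he0 : 0 ≤ erf (p / Real.sqrt (8 * n)) := erf_nonneg (div_nonneg h0 h8.le)
  have hE : Real.exp (p ^ 2 / (16 * n)) ≤ Real.exp (q ^ 2 / (16 * n)) := by
    apply Real.exp_le_exp.2
    have hsq : p ^ 2 ≤ q ^ 2 := by nlinarith
    gcongr
  have hE0 : (0:ℝ) < Real.exp (p ^ 2 / (16 * n)) := Real.exp_pos _
  have step1 : Real.sqrt (n / 8) * Z * erf (p / Real.sqrt (8 * n))
      ≤ Real.sqrt (n / 8) * Z * erf (q / Real.sqrt (8 * n)) :=
    mul_le_mul_of_nonneg_left he hC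
  have h2 : 0 ≤ Real.sqrt (n / 8) * Z * erf (p / Real.sqrt (8 * n)) := by
    exact mul_nonneg (by positivity) he0
  exact mul_le_mul step1 hE hE0.le (le_trans h2 step1)

lemma gtilde_le_lin {n Z x : ℝ} (hn : 0 < n) (hZ : 0 ≤ Z) (hx : 0 ≤ x) :
    gtilde n Z x ≤ Z / (4 * Real.sqrt Real.pi) * x * Real.exp (x ^ 2 / (16 * n)) := by
  unfold gtilde
  have h8 := sqrt8n_pos hn
  have hC : (0:ℝ) ≤ Real.sqrt (n / 8) * Z := by positivity
  have he : erf (x / Real.sqrt (8 * n)) ≤ 2 / Real.sqrt Real.pi * (x / Real.sqrt (8 * n)) :=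
    erf_le_lin (div_nonneg hx h8.le)
  have hE : (0:ℝ) < Real.exp (x ^ 2 / (16 * n)) := Real.exp_pos _
  have hid := const_id (n := n) (Z := Z) hn
  have step : Real.sqrt (n / 8) * Z * erf (x / Real.sqrt (8 * n))
      ≤ Z / (4 * Real.sqrt Real.pi) * x := by
    calc Real.sqrt (n / 8) * Z * erf (x / Real.sqrt (8 * n))
        ≤ Real.sqrt (n / 8) * Z * (2 / Real.sqrt Real.pi * (x / Real.sqrt (8 * n))) :=
          mul_le_mul_of_nonneg_left he hC
      _ = Real.sqrt (n / 8) * Z * (2 / Real.sqrt Real.pi) / Real.sqrt (8 * n) * x := by ring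
      _ = Z / (4 * Real.sqrt Real.pi) * x := by rw [hid]
  exact mul_le_mul_of_nonneg_right step hE.le

/-- increment bound: for 0 ≤ p ≤ q,
    g̃ q − g̃ p ≤ (q−p) * (q/(8n) * g̃ q + Z/(4√π)) -/
lemma gtilde_incr {n Z p q : ℝ} (hn : 0 < n) (hZ : 0 ≤ Z) (h0 : 0 ≤ p) (hpq : p ≤ q) :
    gtilde n Z q - gtilde n Z p
      ≤ (q - p) * (q / (8 * n) * gtilde n Z q + Z / (4 * Real.sqrt Real.pi)) := by
  have h8 := sqrt8n_pos hn
  have hpi := sqrtpi_pos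
  have hq0 : (0:ℝ) ≤ q := le_trans h0 hpq
  have hgq := gtilde_nonneg (Z := Z) hn hZ hq0
  -- notation
  have key : gtilde n Z q - gtilde n Z p
      = Real.sqrt (n / 8) * Z * erf (q / Real.sqrt (8 * n)) *
          (Real.exp (q ^ 2 / (16 * n)) - Real.exp (p ^ 2 / (16 * n)))
        + Real.sqrt (n / 8) * Z * Real.exp (p ^ 2 / (16 * n)) *
          (erf (q / Real.sqrt (8 * n)) - erf (p / Real.sqrt (8 * n))) := by
    unfold gtilde; ring
  -- bound 1
  have ht0 : 0 ≤ (q ^ 2 - p ^ 2) / (16 * n) := by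
    apply div_nonneg (by nlinarith) (by positivity)
  have hb1 : Real.exp (q ^ 2 / (16 * n)) - Real.exp (p ^ 2 / (16 * n))
      ≤ Real.exp (q ^ 2 / (16 * n)) * ((q ^ 2 - p ^ 2) / (16 * n)) := by
    have hEpEq : Real.exp (p ^ 2 / (16 * n))
        = Real.exp (q ^ 2 / (16 * n)) * Real.exp (-((q ^ 2 - p ^ 2) / (16 * n))) := by
      rw [← Real.exp_add]; ring_nf
    have hexp := Real.add_one_le_exp (-((q ^ 2 - p ^ 2) / (16 * n)))
    nlinarith [Real.exp_pos (q ^ 2 / (16 * n))]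
  -- first term ≤ (q-p) * q/(8n) * g̃ q
  have hCe : 0 ≤ Real.sqrt (n / 8) * Z * erf (q / Real.sqrt (8 * n)) := by
    have := erf_nonneg (x := q / Real.sqrt (8 * n)) (div_nonneg hq0 h8.le)
    have h2 : (0:ℝ) ≤ Real.sqrt (n / 8) * Z := by positivity
    nlinarith
  have hterm1 : Real.sqrt (n / 8) * Z * erf (q / Real.sqrt (8 * n)) *
      (Real.exp (q ^ 2 / (16 * n)) - Real.exp (p ^ 2 / (16 * n)))
      ≤ (q - p) * (q / (8 * n) * gtilde n Z q) := by
    have step := mul_le_mul_of_nonneg_left hb1 hCe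
    have heq2 : Real.sqrt (n / 8) * Z * erf (q / Real.sqrt (8 * n)) *
        (Real.exp (q ^ 2 / (16 * n)) * ((q ^ 2 - p ^ 2) / (16 * n)))
        = gtilde n Z q * ((q ^ 2 - p ^ 2) / (16 * n)) := by unfold gtilde; ring
    have hfinal : gtilde n Z q * ((q ^ 2 - p ^ 2) / (16 * n))
        ≤ (q - p) * (q / (8 * n) * gtilde n Z q) := by
      have expand : (q - p) * (q / (8 * n) * gtilde n Z q)
          - gtilde n Z q * ((q ^ 2 - p ^ 2) / (16 * n))
          = gtilde n Z q * ((q - p) * (q - p) / (16 * n)) := by field_simp; ring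
      have hqp : (0:ℝ) ≤ (q - p) * (q - p) / (16 * n) :=
        div_nonneg (mul_nonneg (by linarith) (by linarith)) (by positivity)
      nlinarith [mul_nonneg hgq hqp]
    linarith [step, heq2 ▸ step, hfinal]
  -- bound 2
  have hb2 : erf (q / Real.sqrt (8 * n)) - erf (p / Real.sqrt (8 * n))
      ≤ 2 / Real.sqrt Real.pi *
        (((q - p) / Real.sqrt (8 * n)) * Real.exp (-(p / Real.sqrt (8 * n)) ^ 2)) := by
    have := erf_sub_le (p := p / Real.sqrt (8 * n)) (q := q / Real.sqrt (8 * n))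
      (div_nonneg h0 h8.le) (by gcongr)
    have harg : q / Real.sqrt (8 * n) - p / Real.sqrt (8 * n) = (q - p) / Real.sqrt (8 * n) := by
      ring
    rwa [harg] at this
  have hterm2 : Real.sqrt (n / 8) * Z * Real.exp (p ^ 2 / (16 * n)) *
      (erf (q / Real.sqrt (8 * n)) - erf (p / Real.sqrt (8 * n)))
      ≤ (q - p) * (Z / (4 * Real.sqrt Real.pi)) := by
    have hCE : 0 ≤ Real.sqrt (n / 8) * Z * Real.exp (p ^ 2 / (16 * n)) := by positivity
    have step := mul_le_mul_of_nonneg_left hb2 hCE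
    -- simplify RHS of step
    have hexpid : Real.exp (p ^ 2 / (16 * n)) * Real.exp (-(p / Real.sqrt (8 * n)) ^ 2)
        = Real.exp (p ^ 2 / (16 * n) - p ^ 2 / (8 * n)) := by
      rw [← Real.exp_add]
      congr 1
      have h2 : (Real.sqrt (8 * n)) ^ 2 = 8 * n := sq_sqrt8n hn
      rw [div_pow, h2]; ring
    have hexple : Real.exp (p ^ 2 / (16 * n) - p ^ 2 / (8 * n)) ≤ 1 := by
      apply Real.exp_le_one_iff.2
      have : p ^ 2 / (16 * n) - p ^ 2 / (8 * n) = -(p ^ 2 / (16 * n)) := by field_simp; ring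
      rw [this]
      have hps : (0:ℝ) ≤ p ^ 2 / (16 * n) := by positivity
      linarith
    have hid := const_id (n := n) (Z := Z) hn
    -- RHS of step equals (q-p) * (Z/(4√π)) * exp(neg)
    have hrhs : Real.sqrt (n / 8) * Z * Real.exp (p ^ 2 / (16 * n)) *
        (2 / Real.sqrt Real.pi * (((q - p) / Real.sqrt (8 * n)) *
          Real.exp (-(p / Real.sqrt (8 * n)) ^ 2)))
        = (q - p) * (Z / (4 * Real.sqrt Real.pi)) *
            Real.exp (p ^ 2 / (16 * n) - p ^ 2 / (8 * n)) := by
      rw [← hid, ← hexpid]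
      field_simp
    rw [hrhs] at step
    have hZq : 0 ≤ (q - p) * (Z / (4 * Real.sqrt Real.pi)) :=
      mul_nonneg (by linarith) (by positivity)
    nlinarith [step, hexple, Real.exp_pos (p ^ 2 / (16 * n) - p ^ 2 / (8 * n))]
  calc gtilde n Z q - gtilde n Z p
      = _ + _ := key
    _ ≤ (q - p) * (q / (8 * n) * gtilde n Z q) + (q - p) * (Z / (4 * Real.sqrt Real.pi)) :=
        add_le_add hterm1 hterm2
    _ = (q - p) * (q / (8 * n) * gtilde n Z q + Z / (4 * Real.sqrt Real.pi)) := by ring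


open MeasureTheory intervalIntegral


section gc
variable {n Z U x : ℝ}

lemma gconf_nonneg : 0 ≤ gconf n Z x :=
  le_min (le_max_right _ _) zero_le_one

lemma gconf_le_one : gconf n Z x ≤ 1 := min_le_right _ _

lemma gconf_of_nonpos (hn : 0 < n) (hZ : 0 ≤ Z) (hx : x ≤ 0) : gconf n Z x = 0 := by
  unfold gconf
  rw [max_eq_right (gtilde_nonpos hn hZ hx)]
  exact min_eq_left zero_le_one

lemma gconf_eq_min (hn : 0 < n) (hZ : 0 ≤ Z) (hx : 0 ≤ x) :
    gconf n Z x = min (gtilde n Z x) 1 := by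
  unfold gconf
  rw [max_eq_left (gtilde_nonneg hn hZ hx)]

lemma gconf_le_gtilde (hn : 0 < n) (hZ : 0 ≤ Z) (hx : 0 ≤ x) : gconf n Z x ≤ gtilde n Z x := by
  rw [gconf_eq_min hn hZ hx]; exact min_le_left _ _

lemma gconf_of_ge (hn : 0 < n) (hZ : 0 ≤ Z) (hU0 : 0 ≤ U) (hU1 : gtilde n Z U = 1)
    (hx : U ≤ x) : gconf n Z x = 1 := by
  have h1 : (1:ℝ) ≤ gtilde n Z x := by
    rw [← hU1]; exact gtilde_mono hn hZ hU0 hx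
  rw [gconf_eq_min hn hZ (le_trans hU0 hx)]
  exact min_eq_right h1

lemma gconf_mono (hn : 0 < n) (hZ : 0 ≤ Z) : Monotone (gconf n Z) := by
  intro p q hpq
  rcases le_total q 0 with hq | hq
  · rw [gconf_of_nonpos hn hZ (le_trans hpq hq), gconf_of_nonpos hn hZ hq]
  rcases le_total p 0 with hp | hp
  · rw [gconf_of_nonpos hn hZ hp]; exact gconf_nonneg
  · rw [gconf_eq_min hn hZ hp, gconf_eq_min hn hZ (le_trans hp hpq)]
    exact min_le_min (gtilde_mono hn hZ hp hpq) le_rfl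

lemma clip_diff_le {a b : ℝ} (hab : a ≤ b) : min b 1 - min a 1 ≤ b - a := by
  rcases le_total b 1 with h | h <;> rcases le_total a 1 with h' | h' <;>
    simp [min_eq_left, min_eq_right, h, h'] <;> linarith

lemma gconf_diff_le (hn : 0 < n) (hZ : 0 ≤ Z) {p q : ℝ} (h0 : 0 ≤ p) (hpq : p ≤ q) :
    gconf n Z q - gconf n Z p ≤ gtilde n Z q - gtilde n Z p := by
  rw [gconf_eq_min hn hZ h0, gconf_eq_min hn hZ (le_trans h0 hpq)]
  exact clip_diff_le (gtilde_mono hn hZ h0 hpq)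

end gc

noncomputable def Phi (n Z z : ℝ) : ℝ := ∫ u in (0:ℝ)..z, gconf n Z u

section phi
variable {n Z U : ℝ} (hn : 0 < n) (hZ : 0 ≤ Z)
include hn hZ

lemma g_int (a b : ℝ) : IntervalIntegrable (gconf n Z) volume a b :=
  (gconf_mono hn hZ).intervalIntegrable

lemma Phi_diff (a b : ℝ) : Phi n Z b - Phi n Z a = ∫ u in a..b, gconf n Z u := by
  have h := integral_add_adjacent_intervals (g_int hn hZ 0 a) (g_int hn hZ a b)
  unfold Phi
  rw [← h]; ring

lemma int_lb {a b : ℝ} (hab : a ≤ b) :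
    (b - a) * gconf n Z a ≤ ∫ u in a..b, gconf n Z u := by
  have h : ∫ u in a..b, gconf n Z a ≤ ∫ u in a..b, gconf n Z u :=
    integral_mono_on hab intervalIntegrable_const (g_int hn hZ a b)
      (fun u hu => gconf_mono hn hZ hu.1)
  simpa [smul_eq_mul] using h

lemma int_ub {a b : ℝ} (hab : a ≤ b) :
    (∫ u in a..b, gconf n Z u) ≤ (b - a) * gconf n Z b := by
  have h : ∫ u in a..b, gconf n Z u ≤ ∫ u in a..b, gconf n Z b :=
    integral_mono_on hab (g_int hn hZ a b) intervalIntegrable_const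
      (fun u hu => gconf_mono hn hZ hu.2)
  simpa [smul_eq_mul] using h

/-- key integral increment bound -/
lemma Phi_incr_abs (a b : ℝ) :
    |(Phi n Z b - Phi n Z a) - (b - a) * gconf n Z a|
      ≤ |b - a| * |gconf n Z b - gconf n Z a| := by
  rcases le_total a b with hab | hab
  · rw [Phi_diff hn hZ a b]
    have h1 := int_lb hn hZ hab
    have h2 := int_ub hn hZ hab
    have hm := gconf_mono hn hZ hab
    rw [abs_of_nonneg (by linarith), abs_of_nonneg (by linarith : (0:ℝ) ≤ b - a),
      abs_of_nonneg (by linarith : (0:ℝ) ≤ gconf n Z b - gconf n Z a)]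
    nlinarith
  · rw [Phi_diff hn hZ a b]
    have h1 := int_lb hn hZ hab
    have h2 := int_ub hn hZ hab
    have hm := gconf_mono hn hZ hab
    have hsymm : (∫ u in a..b, gconf n Z u) = - ∫ u in b..a, gconf n Z u :=
      integral_symm b a
    rw [hsymm]
    rw [abs_of_nonpos (by linarith : b - a ≤ 0),
      abs_of_nonpos (by linarith : gconf n Z b - gconf n Z a ≤ 0)]
    rw [abs_of_nonneg (by nlinarith)]
    nlinarith

lemma Phi_of_nonpos {z : ℝ} (hz : z ≤ 0) : Phi n Z z = 0 := by
  unfold Phi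
  rw [integral_symm]
  have h : ∫ u in z..(0:ℝ), gconf n Z u = ∫ u in z..(0:ℝ), (0:ℝ) := by
    apply integral_congr
    intro u hu
    rw [Set.uIcc_of_le hz] at hu
    exact gconf_of_nonpos hn hZ hu.2
  rw [h]
  simp

lemma Phi_nonneg (z : ℝ) : 0 ≤ Phi n Z z := by
  rcases le_total z 0 with hz | hz
  · rw [Phi_of_nonpos hn hZ hz]
  · unfold Phi
    exact integral_nonneg hz (fun u _ => gconf_nonneg)

lemma Phi_le_max (z : ℝ) : Phi n Z z ≤ max z 0 := by
  rcases le_total z 0 with hz | hz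
  · rw [Phi_of_nonpos hn hZ hz]; exact le_max_right _ _
  · have h : Phi n Z z - Phi n Z 0 = ∫ u in (0:ℝ)..z, gconf n Z u := Phi_diff hn hZ 0 z
    have h0 : Phi n Z 0 = 0 := Phi_of_nonpos hn hZ le_rfl
    have hub := int_ub hn hZ (a := 0) (b := z) hz
    have hle : (z - 0) * gconf n Z z ≤ z * 1 := by
      have := gconf_le_one (n := n) (Z := Z) (x := z)
      nlinarith
    have : Phi n Z z ≤ z := by rw [h0] at h; nlinarith
    exact le_trans this (by simp [le_max_iff])

lemma Phi_ge_sub (hU0 : 0 ≤ U) (hU1 : gtilde n Z U = 1) (z : ℝ) :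
    z - U ≤ Phi n Z z := by
  rcases le_total z U with hz | hz
  · have := Phi_nonneg hn hZ z; linarith
  · have h : Phi n Z z - Phi n Z U = ∫ u in U..z, gconf n Z u := Phi_diff hn hZ U z
    have hlb := int_lb hn hZ (a := U) (b := z) hz
    rw [gconf_of_ge hn hZ hU0 hU1 le_rfl] at hlb
    have hPU := Phi_nonneg hn hZ U
    nlinarith

end phi

open Real


lemma exp_sixteenth {n v : ℝ} (hn : 0 < n) (hv : v ^ 2 ≤ n) :
    Real.exp (v ^ 2 / (16 * n)) ≤ 16 / 15 := by
  have h1 : v ^ 2 / (16 * n) ≤ 1 / 16 := by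
    rw [div_le_div_iff₀ (by positivity) (by norm_num)]
    nlinarith
  calc Real.exp (v ^ 2 / (16 * n)) ≤ Real.exp (1 / 16) := Real.exp_le_exp.2 h1
    _ ≤ 1 / (1 - 1 / 16) := exp_le_inv_one_sub (by norm_num) (by norm_num)
    _ = 16 / 15 := by norm_num

section star
variable {n Z U μ x y : ℝ}

set_option maxHeartbeats 1000000 in
/-- (★) upward version -/
lemma star_up (hn : (21:ℝ) ≤ n) (hZ0 : 0 < Z) (hZ1 : Z ≤ 1)
    (hμ0 : 0 < μ) (hμ1 : μ ≤ 1) (hU0 : 0 < U) (hU1 : gtilde n Z U = 1)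
    (hx0 : 0 ≤ x) (hxn : x ≤ n * μ) (hxU : x ≤ U + μ) (hxy : x ≤ y) (hyx : y ≤ x + μ) :
    (1/μ + (y - x)) * (gconf n Z y - gconf n Z x) ≤ x/n * gconf n Z x + Z := by
  have hn0 : (0:ℝ) < n := by linarith
  have hZ := hZ0.le
  have hπ := sqrtpi_ge
  have hπ0 := sqrtpi_pos
  set c0 := Z / (4 * Real.sqrt Real.pi) with hc0def
  have hc0 : 0 < c0 := by positivity
  have hc7 : c0 ≤ Z / 7 := by
    rw [hc0def, div_le_div_iff₀ (by positivity) (by norm_num)]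
    nlinarith
  have hy0 : 0 ≤ y := le_trans hx0 hxy
  have hgx0 : 0 ≤ gtilde n Z x := gtilde_nonneg hn0 hZ hx0
  have hgy0 : 0 ≤ gtilde n Z y := gtilde_nonneg hn0 hZ hy0
  have hincr := gtilde_incr (n := n) (Z := Z) hn0 hZ hx0 hxy
  have hμinv : 1/μ * μ = 1 := by field_simp
  have hB0 : 0 ≤ y / (8 * n) * gtilde n Z y + c0 := by positivity
  have hF0 : (0:ℝ) < 1/μ + (y - x) := by
    have h : (0:ℝ) < 1/μ := by positivity
    linarith
  have hRZ : 0 ≤ x/n * gconf n Z x := mul_nonneg (by positivity) gconf_nonneg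
  have hμ2 : 1 + μ^2 ≤ 2 := by nlinarith
  have hAnn : (0:ℝ) ≤ x/n := by positivity
  -- reduce to main bound
  suffices main : (1 + μ^2) * (y / (8 * n) * gtilde n Z y + c0)
      ≤ x/n * gconf n Z x + Z by
    have hΔ1 : gconf n Z y - gconf n Z x ≤ gtilde n Z y - gtilde n Z x :=
      gconf_diff_le hn0 hZ hx0 hxy
    have h1 : (1/μ + (y - x)) * (gconf n Z y - gconf n Z x)
        ≤ (1/μ + (y - x)) * ((y - x) * (y / (8 * n) * gtilde n Z y + c0)) :=
      mul_le_mul_of_nonneg_left (le_trans hΔ1 hincr) hF0.le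
    have hfac : (1/μ + (y - x)) * (y - x) ≤ 1 + μ^2 := by
      have hdμ : y - x ≤ μ := by linarith
      have hd0 : 0 ≤ y - x := by linarith
      have e1 : 1/μ * (y - x) ≤ 1 := by
        calc 1/μ * (y - x) ≤ 1/μ * μ :=
              mul_le_mul_of_nonneg_left hdμ (by positivity)
          _ = 1 := hμinv
      nlinarith [e1, hdμ, hd0, hμ1]
    have h2 : (1/μ + (y - x)) * ((y - x) * (y / (8 * n) * gtilde n Z y + c0))
        = ((1/μ + (y - x)) * (y - x)) * (y / (8 * n) * gtilde n Z y + c0) := by ring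
    have h3 : ((1/μ + (y - x)) * (y - x)) * (y / (8 * n) * gtilde n Z y + c0)
        ≤ (1 + μ^2) * (y / (8 * n) * gtilde n Z y + c0) :=
      mul_le_mul_of_nonneg_right hfac hB0
    linarith [h1, h2.le, h2.ge, h3, main]
  have k0 : (1 + μ^2) * (y / (8 * n) * gtilde n Z y + c0)
      ≤ 2 * (y / (8 * n) * gtilde n Z y + c0) :=
    mul_le_mul_of_nonneg_right hμ2 hB0
  by_cases hcase : y ≤ Real.sqrt n
  · -- small case : y ≤ √n
    have hy2 : y^2 ≤ n := by
      nlinarith [Real.sq_sqrt hn0.le, Real.sqrt_nonneg n]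
    have hexp : Real.exp (y^2/(16*n)) ≤ 16/15 := exp_sixteenth hn0 hy2
    have hlin := gtilde_le_lin (n := n) (Z := Z) hn0 hZ hy0
    have h1 : y/(8*n) * gtilde n Z y ≤ (2/15) * c0 := by
      have t1 : gtilde n Z y ≤ c0 * y * (16/15) := by
        calc gtilde n Z y ≤ c0 * y * Real.exp (y^2/(16*n)) := hlin
          _ ≤ c0 * y * (16/15) :=
            mul_le_mul_of_nonneg_left hexp (by positivity)
      calc y/(8*n) * gtilde n Z y ≤ y/(8*n) * (c0 * y * (16/15)) :=
            mul_le_mul_of_nonneg_left t1 (by positivity)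
        _ = y^2 * c0 * (2 / (15 * n)) := by field_simp; ring
        _ ≤ (2/15) * c0 := by
            have e1 : y^2 * c0 * (2/(15*n)) ≤ n * c0 * (2/(15*n)) := by
              apply mul_le_mul_of_nonneg_right
                (mul_le_mul_of_nonneg_right hy2 hc0.le) (by positivity)
            have e2 : n * c0 * (2/(15*n)) = (2/15) * c0 := by field_simp
            linarith
    linarith [k0, h1, hc7, hZ0.le, hRZ]
  · -- large case : √n < y
    push_neg at hcase
    have hsn : (9:ℝ)/2 ≤ Real.sqrt n := by
      rw [Real.le_sqrt (by norm_num) hn0.le]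
      nlinarith
    have hxlarge : (7:ℝ)/2 ≤ x := by linarith
    have hxμ : μ ≤ (2/7) * x := by nlinarith
    have hxnn : x/n ≤ μ := by
      rw [div_le_iff₀ hn0]
      nlinarith
    have hyb : y / (8*n) ≤ (9/56) * (x/n) := by
      rw [div_le_iff₀ (by positivity : (0:ℝ) < 8*n)]
      have e : (9/56) * (x/n) * (8*n) = (9/7) * x := by field_simp; ring
      rw [e]
      nlinarith
    have k1 : y/(8*n) * gtilde n Z y ≤ (9/56) * (x/n) * gtilde n Z y :=
      mul_le_mul_of_nonneg_right hyb hgy0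
    by_cases hgx1 : gtilde n Z x ≤ 1
    · -- subcase : g̃ x ≤ 1, gconf x = g̃ x
      have hgcx : gconf n Z x = gtilde n Z x := by
        rw [gconf_eq_min hn0 hZ hx0]; exact min_eq_left hgx1
      have hμμ : μ * μ ≤ 1 := mul_le_one₀ hμ1 hμ0.le hμ1
      have hθ : (y - x) * (y / (8*n)) ≤ 11/84 := by
        have e0 : (y - x) * y ≤ μ * y := mul_le_mul_of_nonneg_right (by linarith) hy0
        have e1 : μ * y ≤ μ * (n * μ + μ) := mul_le_mul_of_nonneg_left (by linarith) hμ0.le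
        have e2 : μ * (n * μ + μ) ≤ n + 1 := by
          have e2a : n * (μ * μ) ≤ n * 1 := mul_le_mul_of_nonneg_left hμμ hn0.le
          nlinarith [e2a, hμμ]
        have e3 : (y - x) * (y / (8*n)) = (y - x) * y / (8 * n) := by ring
        rw [e3, div_le_div_iff₀ (by positivity) (by norm_num)]
        linarith
      have hgyb : gtilde n Z y ≤ (84/73) * (gtilde n Z x + μ * c0) := by
        have a1 : gtilde n Z y - gtilde n Z x
            ≤ ((y - x) * (y / (8*n))) * gtilde n Z y + (y - x) * c0 := by
          linarith [hincr]
        have a2 : ((y - x) * (y / (8*n))) * gtilde n Z y ≤ (11/84) * gtilde n Z y :=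
          mul_le_mul_of_nonneg_right hθ hgy0
        have a3 : (y - x) * c0 ≤ μ * c0 :=
          mul_le_mul_of_nonneg_right (by linarith) hc0.le
        linarith
      have k2 : (x/n) * gtilde n Z y ≤ (x/n) * ((84/73) * (gtilde n Z x + μ * c0)) :=
        mul_le_mul_of_nonneg_left hgyb hAnn
      have k3 : (x/n) * (μ * c0) ≤ c0 := by
        have e1 : (x/n) * (μ * c0) ≤ μ * (μ * c0) :=
          mul_le_mul_of_nonneg_right hxnn (by positivity)
        have e2 : μ * (μ * c0) = (μ * μ) * c0 := by ring
        have e3 : (μ * μ) * c0 ≤ 1 * c0 := mul_le_mul_of_nonneg_right hμμ hc0.le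
        linarith
      have k4 : 0 ≤ (x/n) * gtilde n Z x := mul_nonneg hAnn hgx0
      rw [hgcx]
      linarith [k0, k1, k2, k3, k4, hc7, hZ0.le]
    · -- subcase : g̃ x > 1, gconf x = 1
      push_neg at hgx1
      have hgcx : gconf n Z x = 1 := by
        rw [gconf_eq_min hn0 hZ hx0]; exact min_eq_right hgx1.le
      have hUy : U ≤ y := by
        by_contra h
        push_neg at h
        have e1 : gtilde n Z y ≤ gtilde n Z U := gtilde_mono hn0 hZ hy0 h.le
        have e2 : gtilde n Z x ≤ gtilde n Z y := gtilde_mono hn0 hZ hx0 hxy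
        rw [hU1] at e1
        linarith
      have hincr2 := gtilde_incr (n := n) (Z := Z) hn0 hZ hU0.le hUy
      rw [hU1] at hincr2
      have hμμ : μ * μ ≤ 1 := mul_le_one₀ hμ1 hμ0.le hμ1
      have hθ2 : (y - U) * (y / (8*n)) ≤ 11/42 := by
        have e0 : (y - U) * y ≤ (2*μ) * y := mul_le_mul_of_nonneg_right (by linarith) hy0
        have e1 : (2*μ) * y ≤ (2*μ) * (n * μ + μ) :=
          mul_le_mul_of_nonneg_left (by linarith) (by linarith)
        have e2 : (2*μ) * (n * μ + μ) ≤ 2*n + 2 := by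
          have e2a : n * (μ * μ) ≤ n * 1 := mul_le_mul_of_nonneg_left hμμ hn0.le
          nlinarith [e2a, hμμ]
        have e3 : (y - U) * (y / (8*n)) = (y - U) * y / (8 * n) := by ring
        rw [e3, div_le_div_iff₀ (by positivity) (by norm_num)]
        linarith
      have hc17 : c0 ≤ 1/7 := by linarith [hc7, hZ1]
      have hgyb : gtilde n Z y ≤ 54/31 := by
        have a1 : gtilde n Z y - 1
            ≤ ((y - U) * (y / (8*n))) * gtilde n Z y + (y - U) * c0 := by
          linarith [hincr2]
        have a2 : ((y - U) * (y / (8*n))) * gtilde n Z y ≤ (11/42) * gtilde n Z y :=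
          mul_le_mul_of_nonneg_right hθ2 hgy0
        have a3 : (y - U) * c0 ≤ 2 * c0 :=
          mul_le_mul_of_nonneg_right (by linarith) hc0.le
        linarith
      have kAB : (x/n) * gtilde n Z y ≤ (54/31) * (x/n) := by
        have := mul_le_mul_of_nonneg_left hgyb hAnn
        linarith
      rw [hgcx]
      linarith [k0, k1, kAB, hc7, hZ0.le, hZ1, hAnn]

set_option maxHeartbeats 1000000 in
/-- (★) downward version -/
lemma star_down (hn : (21:ℝ) ≤ n) (hZ0 : 0 < Z) (hZ1 : Z ≤ 1)
    (hμ0 : 0 < μ) (hμ1 : μ ≤ 1) (hU0 : 0 < U) (hU1 : gtilde n Z U = 1)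
    (hx0 : 0 ≤ x) (hxn : x ≤ n * μ) (hxU : x ≤ U + μ) (hyx : y ≤ x) (hylo : -μ ≤ y)
    (hd : x - y ≤ μ + x/n) :
    (1/μ + (x - y)) * (gconf n Z x - gconf n Z y) ≤ x/n * gconf n Z x + Z := by
  have hn0 : (0:ℝ) < n := by linarith
  have hZ := hZ0.le
  have hπ := sqrtpi_ge
  have hπ0 := sqrtpi_pos
  set c0 := Z / (4 * Real.sqrt Real.pi) with hc0def
  have hc0 : 0 < c0 := by positivity
  have hc7 : c0 ≤ Z / 7 := by
    rw [hc0def, div_le_div_iff₀ (by positivity) (by norm_num)]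
    nlinarith
  have hgx0 : 0 ≤ gtilde n Z x := gtilde_nonneg hn0 hZ hx0
  have hμinv : 1/μ * μ = 1 := by field_simp
  have hμμ : μ * μ ≤ 1 := mul_le_one₀ hμ1 hμ0.le hμ1
  have hAnn : (0:ℝ) ≤ x/n := by positivity
  have hxnn : x/n ≤ μ := by
    rw [div_le_iff₀ hn0]
    nlinarith
  have hd2 : x - y ≤ 2*μ := by linarith
  have hd0 : 0 ≤ x - y := by linarith
  have hB0 : 0 ≤ x / (8 * n) * gtilde n Z x + c0 := by positivity
  have hRZ : 0 ≤ x/n * gconf n Z x := mul_nonneg hAnn gconf_nonneg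
  -- replace y by w = max y 0
  set w := max y 0 with hwdef
  have hw0 : 0 ≤ w := le_max_right _ _
  have hwx : w ≤ x := max_le hyx hx0
  have hyw : y ≤ w := le_max_left _ _
  have hgw : gconf n Z y = gconf n Z w := by
    rcases le_total y 0 with h | h
    · rw [gconf_of_nonpos hn0 hZ h, hwdef, max_eq_right h,
        gconf_of_nonpos hn0 hZ le_rfl]
    · rw [hwdef, max_eq_left h]
  have hincr := gtilde_incr (n := n) (Z := Z) hn0 hZ hw0 hwx
  -- suffices main
  suffices main : 6 * (x / (8 * n) * gtilde n Z x + c0) ≤ x/n * gconf n Z x + Z by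
    have hΔ1 : gconf n Z x - gconf n Z w ≤ gtilde n Z x - gtilde n Z w :=
      gconf_diff_le hn0 hZ hw0 hwx
    have hstep : gtilde n Z x - gtilde n Z w
        ≤ (x - y) * (x / (8 * n) * gtilde n Z x + c0) := by
      have e1 : (x - w) * (x / (8 * n) * gtilde n Z x + c0)
          ≤ (x - y) * (x / (8 * n) * gtilde n Z x + c0) :=
        mul_le_mul_of_nonneg_right (by linarith) hB0
      linarith [hincr]
    have hF0 : (0:ℝ) < 1/μ + (x - y) := by
      have h : (0:ℝ) < 1/μ := by positivity
      linarith
    have h1 : (1/μ + (x - y)) * (gconf n Z x - gconf n Z w)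
        ≤ (1/μ + (x - y)) * ((x - y) * (x / (8 * n) * gtilde n Z x + c0)) :=
      mul_le_mul_of_nonneg_left (le_trans hΔ1 hstep) hF0.le
    have hfac : (1/μ + (x - y)) * (x - y) ≤ 6 := by
      have e1 : 1/μ * (x - y) ≤ 2 := by
        calc 1/μ * (x - y) ≤ 1/μ * (2*μ) :=
              mul_le_mul_of_nonneg_left hd2 (by positivity)
          _ = 2 := by field_simp
      nlinarith [e1, hd2, hd0, hμμ]
    have h2 : (1/μ + (x - y)) * ((x - y) * (x / (8 * n) * gtilde n Z x + c0))
        = ((1/μ + (x - y)) * (x - y)) * (x / (8 * n) * gtilde n Z x + c0) := by ring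
    have h3 : ((1/μ + (x - y)) * (x - y)) * (x / (8 * n) * gtilde n Z x + c0)
        ≤ 6 * (x / (8 * n) * gtilde n Z x + c0) :=
      mul_le_mul_of_nonneg_right hfac hB0
    rw [hgw]
    linarith [h1, h2.le, h2.ge, h3, main]
  by_cases hcase : x ≤ Real.sqrt n
  · -- small case
    have hx2 : x^2 ≤ n := by
      nlinarith [Real.sq_sqrt hn0.le, Real.sqrt_nonneg n]
    have hexp : Real.exp (x^2/(16*n)) ≤ 16/15 := exp_sixteenth hn0 hx2
    have hlin := gtilde_le_lin (n := n) (Z := Z) hn0 hZ hx0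
    have h1 : x/(8*n) * gtilde n Z x ≤ (2/15) * c0 := by
      have t1 : gtilde n Z x ≤ c0 * x * (16/15) := by
        calc gtilde n Z x ≤ c0 * x * Real.exp (x^2/(16*n)) := hlin
          _ ≤ c0 * x * (16/15) :=
            mul_le_mul_of_nonneg_left hexp (by positivity)
      calc x/(8*n) * gtilde n Z x ≤ x/(8*n) * (c0 * x * (16/15)) :=
            mul_le_mul_of_nonneg_left t1 (by positivity)
        _ = x^2 * c0 * (2 / (15 * n)) := by field_simp; ring
        _ ≤ (2/15) * c0 := by
            have e1 : x^2 * c0 * (2/(15*n)) ≤ n * c0 * (2/(15*n)) := by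
              apply mul_le_mul_of_nonneg_right
                (mul_le_mul_of_nonneg_right hx2 hc0.le) (by positivity)
            have e2 : n * c0 * (2/(15*n)) = (2/15) * c0 := by field_simp
            linarith
    linarith [h1, hc7, hZ0.le, hRZ]
  · -- large case : √n < x
    push_neg at hcase
    have hsn : (9:ℝ)/2 ≤ Real.sqrt n := by
      rw [Real.le_sqrt (by norm_num) hn0.le]
      nlinarith
    by_cases hgx1 : gtilde n Z x ≤ 1
    · -- gconf x = g̃ x
      have hgcx : gconf n Z x = gtilde n Z x := by
        rw [gconf_eq_min hn0 hZ hx0]; exact min_eq_left hgx1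
      rw [hgcx]
      have e1 : 6 * (x/(8*n) * gtilde n Z x) ≤ (3/4) * (x/n * gtilde n Z x) := by
        have : 6 * (x/(8*n) * gtilde n Z x) = (3/4) * (x/n * gtilde n Z x) := by
          field_simp; ring
        linarith [this.le]
      have e2 : 0 ≤ x/n * gtilde n Z x := mul_nonneg hAnn hgx0
      linarith [e1, e2, hc7, hZ0.le]
    · -- gconf x = 1
      push_neg at hgx1
      have hgcx : gconf n Z x = 1 := by
        rw [gconf_eq_min hn0 hZ hx0]; exact min_eq_right hgx1.le
      rw [hgcx]
      have hUx : U ≤ x := by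
        by_contra h
        push_neg at h
        have e1 : gtilde n Z x ≤ gtilde n Z U := gtilde_mono hn0 hZ hx0 h.le
        rw [hU1] at e1
        linarith
      have hincr2 := gtilde_incr (n := n) (Z := Z) hn0 hZ hU0.le hUx
      rw [hU1] at hincr2
      have hc17 : c0 ≤ 1/7 := by linarith [hc7, hZ1]
      have hθ2 : (x - U) * (x / (8*n)) ≤ 1/8 := by
        have e0 : (x - U) * x ≤ μ * x := mul_le_mul_of_nonneg_right (by linarith) hx0
        have e1 : μ * x ≤ μ * (n * μ) := mul_le_mul_of_nonneg_left hxn hμ0.le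
        have e2 : μ * (n * μ) ≤ n := by
          have e2a : n * (μ * μ) ≤ n * 1 := mul_le_mul_of_nonneg_left hμμ hn0.le
          nlinarith [e2a]
        have e3 : (x - U) * (x / (8*n)) = (x - U) * x / (8 * n) := by ring
        rw [e3, div_le_div_iff₀ (by positivity) (by norm_num)]
        linarith
      have hgxb : gtilde n Z x ≤ 64/49 := by
        have a1 : gtilde n Z x - 1
            ≤ ((x - U) * (x / (8*n))) * gtilde n Z x + (x - U) * c0 := by
          linarith [hincr2]
        have a2 : ((x - U) * (x / (8*n))) * gtilde n Z x ≤ (1/8) * gtilde n Z x :=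
          mul_le_mul_of_nonneg_right hθ2 hgx0
        have a3 : (x - U) * c0 ≤ 1 * c0 :=
          mul_le_mul_of_nonneg_right (by linarith) hc0.le
        linarith
      have e1 : 6 * (x/(8*n) * gtilde n Z x) ≤ (3/4) * (x/n * gtilde n Z x) := by
        have : 6 * (x/(8*n) * gtilde n Z x) = (3/4) * (x/n * gtilde n Z x) := by
          field_simp; ring
        linarith [this.le]
      have e4 : x/n * gtilde n Z x ≤ (64/49) * (x/n) :=  by
        have := mul_le_mul_of_nonneg_left hgxb hAnn
        linarith
      linarith [e1, e4, hc7, hZ0.le, hZ1, hAnn]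

set_option maxHeartbeats 1000000 in
/-- the negative-x case -/
lemma key_neg (hn : (21:ℝ) ≤ n) (hZ0 : 0 < Z) (hZ1 : Z ≤ 1)
    (hμ0 : 0 < μ) (hμ1 : μ ≤ 1) (hxneg : x < 0) (hyμ : y ≤ μ) (hd : |y - x| ≤ 2*μ) :
    (1/μ + |y - x|) * |gconf n Z x - gconf n Z y| ≤ x/n * gconf n Z x + Z := by
  have hn0 : (0:ℝ) < n := by linarith
  have hZ := hZ0.le
  have hπ := sqrtpi_ge
  have hπ0 := sqrtpi_pos
  set c0 := Z / (4 * Real.sqrt Real.pi) with hc0def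
  have hc0 : 0 < c0 := by positivity
  have hc7 : c0 ≤ Z / 7 := by
    rw [hc0def, div_le_div_iff₀ (by positivity) (by norm_num)]
    nlinarith
  have hgcx : gconf n Z x = 0 := gconf_of_nonpos hn0 hZ hxneg.le
  rw [hgcx]
  have habs : |(0:ℝ) - gconf n Z y| = gconf n Z y := by
    rw [zero_sub, abs_neg, abs_of_nonneg gconf_nonneg]
  rw [habs, mul_zero, zero_add]
  have hd0 : 0 ≤ |y - x| := abs_nonneg _
  rcases le_total y 0 with hy | hy
  · rw [gconf_of_nonpos hn0 hZ hy, mul_zero]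
    linarith
  · -- 0 ≤ y ≤ μ
    have hμμ : μ * μ ≤ 1 := mul_le_one₀ hμ1 hμ0.le hμ1
    have hμ2n : μ^2 ≤ n := by nlinarith
    have hexp : Real.exp (μ^2/(16*n)) ≤ 16/15 := exp_sixteenth hn0 hμ2n
    have hgy : gconf n Z y ≤ (16/15) * (c0 * μ) := by
      have t0 : gconf n Z y ≤ gtilde n Z y := gconf_le_gtilde hn0 hZ hy
      have t1 : gtilde n Z y ≤ gtilde n Z μ := gtilde_mono hn0 hZ hy hyμ
      have t2 : gtilde n Z μ ≤ c0 * μ * Real.exp (μ^2/(16*n)) :=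
        gtilde_le_lin hn0 hZ hμ0.le
      have t3 : c0 * μ * Real.exp (μ^2/(16*n)) ≤ c0 * μ * (16/15) :=
        mul_le_mul_of_nonneg_left hexp (by positivity)
      linarith
    have hfac : (1/μ + |y - x|) * gconf n Z y ≤ (1/μ + 2*μ) * ((16/15) * (c0 * μ)) := by
      apply mul_le_mul (by linarith) hgy gconf_nonneg
      have : (0:ℝ) < 1/μ := by positivity
      linarith
    have hfin : (1/μ + 2*μ) * ((16/15) * (c0 * μ)) ≤ (48/15) * c0 := by
      have e1 : (1/μ + 2*μ) * ((16/15) * (c0 * μ))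
          = (16/15) * c0 * (1/μ * μ) + (32/15) * c0 * (μ * μ) := by ring
      have e2 : 1/μ * μ = 1 := by field_simp
      rw [e1, e2]
      have e3 : (32/15) * c0 * (μ * μ) ≤ (32/15) * c0 * 1 :=
        mul_le_mul_of_nonneg_left hμμ (by positivity)
      linarith
    have hZ7 : (48/15) * c0 ≤ Z := by linarith [hc7, hZ0.le]
    linarith

end star

open Real


section step
variable {n Z U μ x b y : ℝ}

set_option maxHeartbeats 1000000 in
lemma key_step (hn : (21:ℝ) ≤ n) (hZ0 : 0 < Z) (hZ1 : Z ≤ 1)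
    (hμ0 : 0 < μ) (hμ1 : μ ≤ 1) (hU0 : 0 < U) (hU1 : gtilde n Z U = 1)
    (hxlo : -μ ≤ x) (hxU : x ≤ U + μ) (hxn : x ≤ n * μ) (hb : |b| ≤ μ)
    (hy : y = if (0 ≤ x ∧ x ≤ U) ∨ (x < 0 ∧ 0 < b) ∨ (U < x ∧ b < 0)
        then (1 - 1/n) * x + b else (1 - 1/n) * x) :
    (1/μ + |y - x|) * |gconf n Z x - gconf n Z y| ≤ x/n * gconf n Z x + Z := by
  have hn0 : (0:ℝ) < n := by linarith
  have hZ := hZ0.le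
  obtain ⟨hb1, hb2⟩ := abs_le.1 hb
  have hρ0 : (0:ℝ) ≤ 1 - 1/n := by
    have : 1/n ≤ 1 := by rw [div_le_one hn0]; linarith
    linarith
  have hinvn : 0 ≤ x/n → True := fun _ => trivial
  split_ifs at hy with hcase
  · -- update step : y = ρ x + b
    rcases le_or_gt 0 x with hx0 | hxneg
    · -- x ≥ 0
      have hxnn : 0 ≤ x/n := by positivity
      have hxnμ : x/n ≤ μ := by rw [div_le_iff₀ hn0]; nlinarith
      have hyx' : y - x = b - x/n := by rw [hy]; ring
      rcases le_total x y with hxy | hyx2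
      · have habs1 : |y - x| = y - x := abs_of_nonneg (by linarith)
        have habs2 : |gconf n Z x - gconf n Z y| = gconf n Z y - gconf n Z x := by
          rw [abs_sub_comm]
          exact abs_of_nonneg (sub_nonneg.2 (gconf_mono hn0 hZ hxy))
        rw [habs1, habs2]
        exact star_up hn hZ0 hZ1 hμ0 hμ1 hU0 hU1 hx0 hxn hxU hxy (by linarith)
      · have habs1 : |y - x| = x - y := by rw [abs_sub_comm]; exact abs_of_nonneg (by linarith)
        have habs2 : |gconf n Z x - gconf n Z y| = gconf n Z x - gconf n Z y :=
          abs_of_nonneg (sub_nonneg.2 (gconf_mono hn0 hZ hyx2))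
        rw [habs1, habs2]
        apply star_down hn hZ0 hZ1 hμ0 hμ1 hU0 hU1 hx0 hxn hxU hyx2 _ (by linarith)
        have : 0 ≤ (1 - 1/n) * x := mul_nonneg hρ0 hx0
        rw [hy]; linarith
    · -- x < 0 : necessarily 0 < b
      have hbpos : 0 < b := by
        rcases hcase with ⟨h1, _⟩ | ⟨_, h2⟩ | ⟨h3, _⟩
        · exact absurd h1 (not_le.2 hxneg)
        · exact h2
        · exact absurd (lt_trans hU0 h3) (not_lt.2 hxneg.le)
      apply key_neg hn hZ0 hZ1 hμ0 hμ1 hxneg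
      · have : (1 - 1/n) * x ≤ 0 := mul_nonpos_of_nonneg_of_nonpos hρ0 hxneg.le
        rw [hy]; linarith
      · have hxn' : -(x/n) ≤ μ := by
          rw [← neg_div, div_le_iff₀ hn0]; nlinarith
        have hxn'' : 0 ≤ -(x/n) := by
          have h3 : x/n ≤ 0 := div_nonpos_of_nonpos_of_nonneg hxneg.le hn0.le
          linarith
        have h1 : y - x = b - x/n := by rw [hy]; ring
        have h2 : b - x/n = b + -(x/n) := by ring
        rw [abs_le]
        constructor <;> rw [h1, h2] <;> linarith
  · -- no update : y = ρ x
    rcases le_or_gt 0 x with hx0 | hxneg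
    · have hxnμ : x/n ≤ μ := by rw [div_le_iff₀ hn0]; nlinarith
      have hyx2 : y ≤ x := by rw [hy]; nlinarith [mul_nonneg (by positivity : (0:ℝ) ≤ 1/n) hx0]
      have habs1 : |y - x| = x - y := by rw [abs_sub_comm]; exact abs_of_nonneg (by linarith)
      have habs2 : |gconf n Z x - gconf n Z y| = gconf n Z x - gconf n Z y :=
        abs_of_nonneg (sub_nonneg.2 (gconf_mono hn0 hZ hyx2))
      rw [habs1, habs2]
      apply star_down hn hZ0 hZ1 hμ0 hμ1 hU0 hU1 hx0 hxn hxU hyx2 _ _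
      · have : 0 ≤ (1 - 1/n) * x := mul_nonneg hρ0 hx0
        rw [hy]; linarith
      · have h1 : x - y = x/n := by rw [hy]; ring
        rw [h1]; linarith
    · have hgx := gconf_of_nonpos hn0 hZ hxneg.le
      have hyneg : y ≤ 0 := by
        rw [hy]; exact mul_nonpos_of_nonneg_of_nonpos hρ0 hxneg.le
      have hgy := gconf_of_nonpos hn0 hZ hyneg
      rw [hgx, hgy, sub_zero, abs_zero, mul_zero, mul_zero, zero_add]
      exact hZ0.le

set_option maxHeartbeats 1000000 in
lemma step_ineqs (hn : (21:ℝ) ≤ n) (hZ0 : 0 < Z) (hZ1 : Z ≤ 1)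
    (hμ0 : 0 < μ) (hμ1 : μ ≤ 1) (hU0 : 0 < U) (hU1 : gtilde n Z U = 1)
    (hxlo : -μ ≤ x) (hxU : x ≤ U + μ) (hxn : x ≤ n * μ) (hb : |b| ≤ μ)
    (hy : y = if (0 ≤ x ∧ x ≤ U) ∨ (x < 0 ∧ 0 < b) ∨ (U < x ∧ b < 0)
        then (1 - 1/n) * x + b else (1 - 1/n) * x) :
    gconf n Z x * b - 1/μ * |gconf n Z x - gconf n Z y|
        ≥ (Phi n Z y - Phi n Z x) - Z ∧
    gconf n Z x * b - 1/μ * |gconf n Z x - gconf n Z y|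
        ≥ b - ((y - Phi n Z y) - (x - Phi n Z x)) - (U + 2*μ)/n - Z := by
  have hn0 : (0:ℝ) < n := by linarith
  have hZ := hZ0.le
  obtain ⟨hb1, hb2⟩ := abs_le.1 hb
  have hK := key_step hn hZ0 hZ1 hμ0 hμ1 hU0 hU1 hxlo hxU hxn hb hy
  have hP := Phi_incr_abs (n := n) (Z := Z) hn0 hZ x y
  have hΔc : |gconf n Z y - gconf n Z x| = |gconf n Z x - gconf n Z y| := abs_sub_comm _ _
  rw [hΔc] at hP
  have hI : Phi n Z y - Phi n Z x
      ≤ (y - x) * gconf n Z x + |y - x| * |gconf n Z x - gconf n Z y| := by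
    have := (abs_le.1 hP).2
    linarith
  have hΔ0 : 0 ≤ |gconf n Z x - gconf n Z y| := abs_nonneg _
  -- claims
  have claim1 : x/n * gconf n Z x ≤ gconf n Z x * (b - (y - x)) ∧
      x/n * gconf n Z x ≤ (gconf n Z x - 1) * (b - (y - x)) + (U + 2*μ)/n := by
    have hbudget : x/n ≤ (U + 2*μ)/n := by gcongr; linarith
    split_ifs at hy with hcase
    · -- update : b - (y - x) = x/n
      have he : b - (y - x) = x/n := by rw [hy]; ring
      rw [he]
      constructor
      · linarith [mul_comm (x/n) (gconf n Z x)]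
      · have : (gconf n Z x - 1) * (x/n) + (U + 2*μ)/n - x/n * gconf n Z x
            = (U + 2*μ)/n - x/n := by ring
        linarith
    · -- no update : b - (y - x) = b + x/n
      have he : b - (y - x) = b + x/n := by rw [hy]; ring
      rw [he]
      rcases le_or_gt 0 x with hx0 | hxneg
      · -- x > U and b ≥ 0
        have hcase2 : U < x ∧ 0 ≤ b := by
          by_contra h
          rcases le_or_gt x U with hxU2 | hUx
          · exact hcase (Or.inl ⟨hx0, hxU2⟩)
          · push_neg at h
            exact hcase (Or.inr (Or.inr ⟨hUx, h hUx⟩))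
        have hg1 : gconf n Z x = 1 := gconf_of_ge hn0 hZ hU0.le hU1 hcase2.1.le
        rw [hg1]
        constructor
        · have : 0 ≤ b := hcase2.2
          linarith
        · linarith
      · -- x < 0 and b ≤ 0
        have hble : b ≤ 0 := by
          by_contra h
          push_neg at h
          exact hcase (Or.inr (Or.inl ⟨hxneg, h⟩))
        have hg0 : gconf n Z x = 0 := gconf_of_nonpos hn0 hZ hxneg.le
        rw [hg0]
        constructor
        · have : x/n * 0 = (0:ℝ) * (b + x/n) := by ring
          exact this.le
        · have e1 : (0 - 1) * (b + x/n) + (U + 2*μ)/n = -b - x/n + (U + 2*μ)/n := by ring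
          have e2 : 0 ≤ -(x/n) := by
            have : x/n ≤ 0 := div_nonpos_of_nonpos_of_nonneg hxneg.le hn0.le
            linarith
          have e3 : 0 ≤ (U + 2*μ)/n := by positivity
          rw [mul_zero]
          linarith [e1, e2, e3, hble]
  obtain ⟨c1, c2⟩ := claim1
  constructor
  · nlinarith [hK, hI, c1, hΔ0]
  · nlinarith [hK, hI, c2, hΔ0]

end step

open Real


section main
variable {n Z U μ : ℝ} {T : ℕ} {b x : ℕ → ℝ}

lemma invariant (hn : (21:ℝ) ≤ n) (hμ0 : 0 < μ) (hμ1 : μ ≤ 1) (hU0 : 0 < U)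
    (hb : ∀ t, 1 ≤ t → t ≤ T → |b t| ≤ μ) (hx1 : x 1 = 0)
    (hxrec : ∀ t, 1 ≤ t → t ≤ T →
      x (t + 1) = if (0 ≤ x t ∧ x t ≤ U) ∨ (x t < 0 ∧ 0 < b t) ∨ (U < x t ∧ b t < 0)
        then (1 - 1 / n) * x t + b t
        else (1 - 1 / n) * x t) :
    ∀ t, 1 ≤ t → t ≤ T + 1 → (-μ ≤ x t ∧ x t ≤ U + μ ∧ x t ≤ n * μ) := by
  have hn0 : (0:ℝ) < n := by linarith
  have hρ0 : (0:ℝ) ≤ 1 - 1/n := by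
    have : 1/n ≤ 1 := by rw [div_le_one hn0]; linarith
    linarith
  have hρ1 : 1 - 1/n ≤ 1 := by
    have : (0:ℝ) < 1/n := by positivity
    linarith
  have hnμ : μ ≤ n * μ := by nlinarith
  intro t ht
  induction t, ht using Nat.le_induction with
  | base =>
    intro _
    rw [hx1]
    refine ⟨by linarith, by linarith, by nlinarith⟩
  | succ t ht IH =>
    intro htT1
    have htT : t ≤ T := by omega
    obtain ⟨h1, h2, h3⟩ := IH (by omega)
    have hrec := hxrec t ht htT
    obtain ⟨hb1, hb2⟩ := abs_le.1 (hb t ht htT)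
    split_ifs at hrec with hcase
    · rcases le_or_gt 0 (x t) with hx0 | hxneg
      · have hρx0 : 0 ≤ (1 - 1/n) * x t := mul_nonneg hρ0 hx0
        have hρxle : (1 - 1/n) * x t ≤ x t := by nlinarith
        have hup : (1 - 1/n) * (n * μ) = n * μ - μ := by field_simp
        have hρxn : (1 - 1/n) * x t ≤ (1 - 1/n) * (n * μ) :=
          mul_le_mul_of_nonneg_left h3 hρ0
        refine ⟨by rw [hrec]; linarith, ?_, by rw [hrec]; linarith⟩
        rcases hcase with ⟨_, hxU2⟩ | ⟨hneg, _⟩ | ⟨_, hbneg⟩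
        · rw [hrec]; linarith
        · linarith
        · rw [hrec]; linarith
      · have hbpos : 0 < b t := by
          rcases hcase with ⟨hc1, _⟩ | ⟨_, hc2⟩ | ⟨hc3, _⟩
          · linarith
          · exact hc2
          · linarith
        have hρx : (1 - 1/n) * (-μ) ≤ (1 - 1/n) * x t := mul_le_mul_of_nonneg_left h1 hρ0
        have hρneg : (1 - 1/n) * x t ≤ 0 := mul_nonpos_of_nonneg_of_nonpos hρ0 hxneg.le
        have hlow : -μ ≤ (1 - 1/n) * (-μ) := by nlinarith
        exact ⟨by rw [hrec]; linarith, by rw [hrec]; linarith, by rw [hrec]; linarith⟩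
    · rcases le_or_gt 0 (x t) with hx0 | hxneg
      · have hρx0 : 0 ≤ (1 - 1/n) * x t := mul_nonneg hρ0 hx0
        have hρxle : (1 - 1/n) * x t ≤ x t := by nlinarith
        exact ⟨by rw [hrec]; linarith, by rw [hrec]; linarith, by rw [hrec]; linarith⟩
      · have hρxge : x t ≤ (1 - 1/n) * x t := by nlinarith
        have hρneg : (1 - 1/n) * x t ≤ 0 := mul_nonpos_of_nonneg_of_nonpos hρ0 hxneg.le
        exact ⟨by rw [hrec]; linarith, by rw [hrec]; linarith, by rw [hrec]; nlinarith⟩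

set_option maxHeartbeats 1000000 in
lemma sum_bounds (hn : (21:ℝ) ≤ n) (hZ0 : 0 < Z) (hZ1 : Z ≤ 1)
    (hμ0 : 0 < μ) (hμ1 : μ ≤ 1) (hU0 : 0 < U) (hU1 : gtilde n Z U = 1)
    (hb : ∀ t, 1 ≤ t → t ≤ T → |b t| ≤ μ) (hx1 : x 1 = 0)
    (hxrec : ∀ t, 1 ≤ t → t ≤ T →
      x (t + 1) = if (0 ≤ x t ∧ x t ≤ U) ∨ (x t < 0 ∧ 0 < b t) ∨ (U < x t ∧ b t < 0)
        then (1 - 1 / n) * x t + b t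
        else (1 - 1 / n) * x t)
    (r : ℕ) (hr : 1 ≤ r) :
    ∀ s : ℕ, r ≤ s → s ≤ T →
      (∑ t ∈ Finset.Icc r s,
          (gconf n Z (x t) * b t - 1/μ * |gconf n Z (x t) - gconf n Z (x (t + 1))|)
        ≥ (Phi n Z (x (s+1)) - Phi n Z (x r)) - Z * ((s : ℝ) - r + 1)) ∧
      (∑ t ∈ Finset.Icc r s,
          (gconf n Z (x t) * b t - 1/μ * |gconf n Z (x t) - gconf n Z (x (t + 1))|)
        ≥ (∑ t ∈ Finset.Icc r s, b t)
            - ((x (s+1) - Phi n Z (x (s+1))) - (x r - Phi n Z (x r)))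
            - ((s : ℝ) - r + 1) * ((U + 2*μ)/n + Z)) := by
  have hinv := invariant hn hμ0 hμ1 hU0 hb hx1 hxrec
  have hstep : ∀ t : ℕ, 1 ≤ t → t ≤ T →
      (gconf n Z (x t) * b t - 1/μ * |gconf n Z (x t) - gconf n Z (x (t+1))|
        ≥ (Phi n Z (x (t+1)) - Phi n Z (x t)) - Z) ∧
      (gconf n Z (x t) * b t - 1/μ * |gconf n Z (x t) - gconf n Z (x (t+1))|
        ≥ b t - ((x (t+1) - Phi n Z (x (t+1))) - (x t - Phi n Z (x t))) - (U + 2*μ)/n - Z) := by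
    intro t ht htT
    obtain ⟨h1, h2, h3⟩ := hinv t ht (by omega)
    exact step_ineqs hn hZ0 hZ1 hμ0 hμ1 hU0 hU1 h1 h2 h3 (hb t ht htT) (hxrec t ht htT)
  intro s hs
  induction s, hs using Nat.le_induction with
  | base =>
    intro hrT
    rw [Finset.Icc_self, Finset.sum_singleton, Finset.sum_singleton]
    obtain ⟨hA, hB⟩ := hstep r hr hrT
    constructor
    · have e : ((r:ℝ) - r + 1) = 1 := by ring
      rw [e]; linarith
    · have e : ((r:ℝ) - r + 1) = 1 := by ring
      rw [e]; linarith
  | succ s hs IH =>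
    intro hsT
    have hsT' : s ≤ T := by omega
    obtain ⟨IH1, IH2⟩ := IH hsT'
    obtain ⟨hA, hB⟩ := hstep (s+1) (by omega) hsT
    have hins : insert (s+1) (Finset.Icc r s) = Finset.Icc r (s+1) :=
      Finset.insert_Icc_right_eq_Icc_add_one (by omega)
    have hnotmem : s+1 ∉ Finset.Icc r s := by simp
    have hsum1 : ∑ t ∈ Finset.Icc r (s+1),
        (gconf n Z (x t) * b t - 1/μ * |gconf n Z (x t) - gconf n Z (x (t + 1))|)
        = (∑ t ∈ Finset.Icc r s,
            (gconf n Z (x t) * b t - 1/μ * |gconf n Z (x t) - gconf n Z (x (t + 1))|))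
          + (gconf n Z (x (s+1)) * b (s+1)
              - 1/μ * |gconf n Z (x (s+1)) - gconf n Z (x (s+1+1))|) := by
      rw [← hins, Finset.sum_insert hnotmem]; ring
    have hsum2 : ∑ t ∈ Finset.Icc r (s+1), b t
        = (∑ t ∈ Finset.Icc r s, b t) + b (s+1) := by
      rw [← hins, Finset.sum_insert hnotmem]; ring
    have hcast : ((s+1 : ℕ) : ℝ) - r + 1 = ((s:ℝ) - r + 1) + 1 := by push_cast; ring
    constructor
    · rw [hsum1, hcast]; linarith
    · rw [hsum1, hsum2, hcast]; linarith

end main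

end DNPaux

set_option maxHeartbeats 1000000 in
open DNPaux in
/-- **Theorem 1 (first bound), reward lower bound for DNP-cu over any interval.** -/
theorem dnp_cu_reward_lower_bound
    (n Z : ℝ) (hn0 : 0 < n) (hZ0 : 0 < Z) (hZ : Z ≤ 1 / Real.exp 1)
    (hn : n ≥ max (8 * Real.exp 1) (16 * Real.log (1 / Z)))
    (U : ℝ) (hUpos : 0 < U) (hUdef : gtilde n Z U = 1)
    (hUuniq : ∀ y, 0 < y → gtilde n Z y = 1 → y = U)
    (T : ℕ) (b x : ℕ → ℝ)
    (μ : ℝ) (hμ0 : 0 < μ) (hμ1 : μ ≤ 1)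
    (hb : ∀ t, 1 ≤ t → t ≤ T → |b t| ≤ μ)
    (hx1 : x 1 = 0)
    (hxrec : ∀ t, 1 ≤ t → t ≤ T →
      x (t + 1) = if (0 ≤ x t ∧ x t ≤ U) ∨ (x t < 0 ∧ 0 < b t) ∨ (U < x t ∧ b t < 0)
        then (1 - 1 / n) * x t + b t
        else (1 - 1 / n) * x t)
    (r s : ℕ) (hr : 1 ≤ r) (hrs : r ≤ s) (hsT : s ≤ T) :
    ∑ t ∈ Finset.Icc r s,
        (gconf n Z (x t) * b t - (1 / μ) * |gconf n Z (x t) - gconf n Z (x (t + 1))|)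
      ≥ max 0 (∑ t ∈ Finset.Icc r s, b t
            - ((s : ℝ) - r + 1) / n * (U + 2 * μ) - U - μ)
        - U - μ - Z * ((s : ℝ) - r + 1) := by
  
  have he := Real.exp_one_gt_d9
  have hn21 : (21:ℝ) ≤ n := by
    have h8 : 8 * Real.exp 1 ≤ n := le_trans (le_max_left _ _) hn
    linarith
  have hZ1 : Z ≤ 1 := by
    have hepos : (0:ℝ) < Real.exp 1 := Real.exp_pos 1
    have h1 : 1 / Real.exp 1 ≤ 1 := by rw [div_le_one hepos]; linarith
    linarith
  obtain ⟨SA, SB⟩ := DNPaux.sum_bounds hn21 hZ0 hZ1 hμ0 hμ1 hUpos hUdef hb hx1 hxrec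
    r hr s hrs hsT
  have hinv := DNPaux.invariant hn21 hμ0 hμ1 hUpos hb hx1 hxrec
  obtain ⟨h1r, h2r, _⟩ := hinv r hr (by omega)
  have hPhir : Phi n Z (x r) ≤ U + μ :=
    le_trans (DNPaux.Phi_le_max hn0 hZ0.le (x r)) (max_le (by linarith) (by linarith))
  have hPhis : 0 ≤ Phi n Z (x (s+1)) := DNPaux.Phi_nonneg hn0 hZ0.le _
  have hPsis : x (s+1) - Phi n Z (x (s+1)) ≤ U := by
    linarith [DNPaux.Phi_ge_sub hn0 hZ0.le hUpos.le hUdef (x (s+1))]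
  have hPsir : -μ ≤ x r - Phi n Z (x r) := by
    have ha := DNPaux.Phi_le_max hn0 hZ0.le (x r)
    have h2 : max (x r) 0 ≤ x r + μ := max_le (by linarith) (by linarith)
    linarith
  have h0 : (0:ℝ) ≤ (∑ t ∈ Finset.Icc r s,
      (gconf n Z (x t) * b t - (1 / μ) * |gconf n Z (x t) - gconf n Z (x (t + 1))|))
      + U + μ + Z * ((s : ℝ) - r + 1) := by
    linarith [SA, hPhir, hPhis]
  have hA : (∑ t ∈ Finset.Icc r s, b t)
        - ((s : ℝ) - r + 1) / n * (U + 2 * μ) - U - μ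
      ≤ (∑ t ∈ Finset.Icc r s,
          (gconf n Z (x t) * b t - (1 / μ) * |gconf n Z (x t) - gconf n Z (x (t + 1))|))
        + U + μ + Z * ((s : ℝ) - r + 1) := by
    have hexp : ((s : ℝ) - r + 1) * ((U + 2*μ)/n + Z)
        = ((s : ℝ) - r + 1) / n * (U + 2 * μ) + Z * ((s : ℝ) - r + 1) := by ring
    linarith [SB, hPsis, hPsir]
  have hmax := max_le h0 hA
  linarith [hmax]
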